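/- For every constant c > 0 there exist a, b ∈ (0,1) such that I(b) − I(a) − I′(b)(b − a) + (c/2) I″(b)(a − b)² < 0. In other words, the two-point inequality I(b) − I(a) − I′(b)(b − a) ≥ (c/2)(−I″(b))(a − b)² fails to hold for all pairs a, b ∈ (0,1), no matter how small c > 0 is chosen. -/

import Mathlib

/-- The standard Gaussian distribution function `Φ(x) = (2π)^{-1/2} ∫_{-∞}^x e^{-y²/2} dy`. -/
noncomputable def stdGaussCDF (x : ℝ) : ℝ :=
  ∫ y in Set.Iic x, Real.exp (-y ^ 2 / 2) / Real.sqrt (2 * Real.pi)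

/-- The Gaussian isoperimetric profile `I = φ ∘ Φ⁻¹` on `[0,1]`, with `I(0) = I(1) = 0`. -/
noncomputable def gaussI (p : ℝ) : ℝ :=
  if p = 0 ∨ p = 1 then 0
  else Real.exp (-(Function.invFun stdGaussCDF p) ^ 2 / 2) / Real.sqrt (2 * Real.pi)

open MeasureTheory Real Set Filter Topology

noncomputable def gpdf (x : ℝ) : ℝ := Real.exp (-x ^ 2 / 2) / Real.sqrt (2 * Real.pi)

lemma gpdf_pos (x : ℝ) : 0 < gpdf x := by
  unfold gpdf
  positivity

lemma gpdf_cont : Continuous gpdf := by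
  unfold gpdf
  continuity

lemma gpdf_integrable : Integrable gpdf := by
  have h : Integrable (fun x : ℝ => Real.exp (-(1/2) * x ^ 2)) := integrable_exp_neg_mul_sq (by norm_num)
  have := h.div_const (Real.sqrt (2 * Real.pi))
  convert this using 2 with x
  · unfold gpdf
    ring_nf

lemma gpdf_integral : ∫ x, gpdf x = 1 := by
  unfold gpdf
  rw [integral_div]
  rw [show (fun x : ℝ => Real.exp (-x ^ 2 / 2)) = fun x : ℝ => Real.exp (-(1/2) * x ^ 2) by ext x; ring_nf]
  rw [integral_gaussian]
  rw [div_eq_one_iff_eq (by positivity)]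
  congr 1
  ring

lemma stdG_eq (x : ℝ) : stdGaussCDF x = ∫ y in Set.Iic x, gpdf y := rfl

lemma stdG_sub (x y : ℝ) (hxy : x ≤ y) :
    stdGaussCDF y - stdGaussCDF x = ∫ t in x..y, gpdf t := by
  rw [stdG_eq, stdG_eq, intervalIntegral.integral_Iic_sub_Iic
    (gpdf_integrable.integrableOn) (gpdf_integrable.integrableOn)]

lemma stdG_strictMono : StrictMono stdGaussCDF := by
  intro x y hxy
  have h := stdG_sub x y hxy.le
  have hpos : 0 < ∫ t in x..y, gpdf t :=
    intervalIntegral.intervalIntegral_pos_of_pos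
      (gpdf_integrable.intervalIntegrable) (fun t => gpdf_pos t) hxy
  linarith

lemma stdG_hasDeriv (x : ℝ) : HasDerivAt stdGaussCDF (gpdf x) x := by
  have key : ∀ y : ℝ, stdGaussCDF y = stdGaussCDF 0 + ∫ t in (0:ℝ)..y, gpdf t := by
    intro y
    rcases le_total 0 y with h | h
    · have := stdG_sub 0 y h; linarith
    · have := stdG_sub y 0 h
      rw [intervalIntegral.integral_symm]
      linarith
  have h2 : HasDerivAt (fun y => stdGaussCDF 0 + ∫ t in (0:ℝ)..y, gpdf t) (gpdf x) x := by
    apply HasDerivAt.const_add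
    exact intervalIntegral.integral_hasDerivAt_right
      (gpdf_integrable.intervalIntegrable)
      (gpdf_integrable.1.stronglyMeasurableAtFilter)
      gpdf_cont.continuousAt
  exact h2.congr_of_eventuallyEq (Filter.Eventually.of_forall key)

lemma stdG_tendsto_atBot : Tendsto stdGaussCDF atBot (𝓝 0) := by
  have h := intervalIntegral_tendsto_integral_Iic (0:ℝ)
    (gpdf_integrable.integrableOn) (tendsto_id (α := ℝ) (x := atBot))
  -- h : Tendsto (fun x => ∫ t in x..0, gpdf t) atBot (𝓝 (∫ t in Iic 0, gpdf t))
  have heq : ∀ x : ℝ, stdGaussCDF x = stdGaussCDF 0 - ∫ t in x..(0:ℝ), gpdf t := by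
    intro x
    rcases le_total x 0 with hx | hx
    · have := stdG_sub x 0 hx; linarith
    · have := stdG_sub 0 x hx
      rw [intervalIntegral.integral_symm]; linarith
  have h2 : Tendsto (fun x : ℝ => stdGaussCDF 0 - ∫ t in x..(0:ℝ), gpdf t) atBot
      (𝓝 (stdGaussCDF 0 - ∫ t in Iic (0:ℝ), gpdf t)) := tendsto_const_nhds.sub h
  rw [show (stdGaussCDF 0 - ∫ t in Iic (0:ℝ), gpdf t) = 0 by rw [← stdG_eq]; ring] at h2
  exact h2.congr (fun x => (heq x).symm)

lemma stdG_tendsto_atTop : Tendsto stdGaussCDF atTop (𝓝 1) := by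
  have h := intervalIntegral_tendsto_integral_Ioi (0:ℝ)
    (gpdf_integrable.integrableOn) (tendsto_id (α := ℝ) (x := atTop))
  have heq : ∀ x : ℝ, stdGaussCDF x = stdGaussCDF 0 + ∫ t in (0:ℝ)..x, gpdf t := by
    intro x
    rcases le_total 0 x with hx | hx
    · have := stdG_sub 0 x hx; linarith
    · have := stdG_sub x 0 hx
      rw [intervalIntegral.integral_symm]; linarith
  have h2 : Tendsto (fun x : ℝ => stdGaussCDF 0 + ∫ t in (0:ℝ)..x, gpdf t) atTop
      (𝓝 (stdGaussCDF 0 + ∫ t in Ioi (0:ℝ), gpdf t)) := tendsto_const_nhds.add h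
  have hkey : stdGaussCDF 0 + ∫ t in Ioi (0:ℝ), gpdf t = 1 := by
    rw [stdG_eq, intervalIntegral.integral_Iic_add_Ioi
      (gpdf_integrable.integrableOn) (gpdf_integrable.integrableOn), gpdf_integral]
  rw [hkey] at h2
  exact h2.congr (fun x => (heq x).symm)

lemma stdG_lt_one (x : ℝ) : stdGaussCDF x < 1 := by
  have h1 : stdGaussCDF (x + 1) ≤ 1 := by
    apply ge_of_tendsto stdG_tendsto_atTop
    filter_upwards [eventually_ge_atTop (x + 1)] with y hy
    exact (stdG_strictMono.le_iff_le).2 hy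
  exact lt_of_lt_of_le (stdG_strictMono (by linarith)) h1

lemma stdG_pos (x : ℝ) : 0 < stdGaussCDF x := by
  have h1 : 0 ≤ stdGaussCDF (x - 1) := by
    apply le_of_tendsto stdG_tendsto_atBot
    filter_upwards [eventually_le_atBot (x - 1)] with y hy
    exact (stdG_strictMono.le_iff_le).2 hy
  exact lt_of_le_of_lt h1 (stdG_strictMono (by linarith))

lemma stdG_surj {p : ℝ} (hp : p ∈ Set.Ioo (0:ℝ) 1) : ∃ x, stdGaussCDF x = p := by
  obtain ⟨hp0, hp1⟩ := hp
  have h1 : ∀ᶠ x in atTop, p < stdGaussCDF x :=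
    stdG_tendsto_atTop.eventually (eventually_gt_nhds hp1)
  have h2 : ∀ᶠ x in atBot, stdGaussCDF x < p :=
    stdG_tendsto_atBot.eventually (eventually_lt_nhds hp0)
  obtain ⟨b, hb⟩ := h1.exists
  obtain ⟨a, ha⟩ := h2.exists
  have hab : a ≤ b := by
    by_contra h
    push_neg at h
    exact absurd (stdG_strictMono h) (by linarith)
  have hcont : ContinuousOn stdGaussCDF (Set.Icc a b) :=
    fun x _ => ((stdG_hasDeriv x).continuousAt).continuousWithinAt
  obtain ⟨x, _, hx⟩ := intermediate_value_Icc hab hcont ⟨ha.le, hb.le⟩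
  exact ⟨x, hx⟩

lemma stdG_invFun (x : ℝ) : Function.invFun stdGaussCDF (stdGaussCDF x) = x :=
  Function.leftInverse_invFun stdG_strictMono.injective x

lemma stdG_rightInv {p : ℝ} (hp : p ∈ Set.Ioo (0:ℝ) 1) :
    stdGaussCDF (Function.invFun stdGaussCDF p) = p :=
  Function.invFun_eq (stdG_surj hp)

lemma invFun_continuousAt (t : ℝ) : ContinuousAt (Function.invFun stdGaussCDF) (stdGaussCDF t) := by
  rw [Metric.continuousAt_iff]
  intro ε hε
  set b := stdGaussCDF t
  have hlo : stdGaussCDF (t - ε/2) < b := stdG_strictMono (by linarith)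
  have hhi : b < stdGaussCDF (t + ε/2) := stdG_strictMono (by linarith)
  refine ⟨min (b - stdGaussCDF (t - ε/2)) (stdGaussCDF (t + ε/2) - b), lt_min (by linarith) (by linarith), ?_⟩
  intro p hp
  rw [Real.dist_eq] at hp ⊢
  have hp1 : stdGaussCDF (t - ε/2) < p := by
    have := abs_lt.1 hp
    have := min_le_left (b - stdGaussCDF (t - ε/2)) (stdGaussCDF (t + ε/2) - b)
    linarith [this, (abs_lt.1 hp).1]
  have hp2 : p < stdGaussCDF (t + ε/2) := by
    have := min_le_right (b - stdGaussCDF (t - ε/2)) (stdGaussCDF (t + ε/2) - b)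
    linarith [this, (abs_lt.1 hp).2]
  have hpIoo : p ∈ Set.Ioo (0:ℝ) 1 :=
    ⟨lt_trans (stdG_pos _) hp1, lt_trans hp2 (stdG_lt_one _)⟩
  obtain ⟨s, hs⟩ := stdG_surj hpIoo
  rw [← hs, stdG_invFun, stdG_invFun]
  have hs1 : t - ε/2 < s := by
    by_contra h; push_neg at h
    have := stdG_strictMono.le_iff_le.2 h
    rw [hs] at this; linarith
  have hs2 : s < t + ε/2 := by
    by_contra h; push_neg at h
    have := stdG_strictMono.le_iff_le.2 h
    rw [hs] at this; linarith
  rw [abs_lt]; constructor <;> linarith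

lemma invFun_hasDeriv (t : ℝ) :
    HasDerivAt (Function.invFun stdGaussCDF) (gpdf t)⁻¹ (stdGaussCDF t) := by
  apply HasDerivAt.of_local_left_inverse (invFun_continuousAt t)
  · rw [stdG_invFun]; exact stdG_hasDeriv t
  · exact (gpdf_pos t).ne'
  · have hopen : IsOpen (Set.Ioo (0:ℝ) 1) := isOpen_Ioo
    have hmem : stdGaussCDF t ∈ Set.Ioo (0:ℝ) 1 := ⟨stdG_pos t, stdG_lt_one t⟩
    filter_upwards [hopen.mem_nhds hmem] with p hp
    exact stdG_rightInv hp

lemma gpdf_hasDeriv (x : ℝ) : HasDerivAt gpdf (-x * gpdf x) x := by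
  have h1 : HasDerivAt (fun y : ℝ => -y ^ 2 / 2) (-x) x := by
    have := ((hasDerivAt_pow 2 x).neg).div_const 2
    refine this.congr_deriv ?_
    push_cast; ring
  have h2 : HasDerivAt (fun y : ℝ => Real.exp (-y ^ 2 / 2)) (Real.exp (-x ^ 2 / 2) * (-x)) x :=
    (Real.hasDerivAt_exp _).comp x h1
  have h3 := h2.div_const (Real.sqrt (2 * Real.pi))
  refine h3.congr_deriv ?_
  unfold gpdf
  ring

lemma gaussI_eqOn : ∀ p ∈ Set.Ioo (0:ℝ) 1, gaussI p = gpdf (Function.invFun stdGaussCDF p) := by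
  intro p hp
  unfold gaussI gpdf
  rw [if_neg]
  push_neg
  exact ⟨hp.1.ne', hp.2.ne⟩

lemma gaussI_at (t : ℝ) : gaussI (stdGaussCDF t) = gpdf t := by
  rw [gaussI_eqOn _ ⟨stdG_pos t, stdG_lt_one t⟩, stdG_invFun]

lemma gaussI_hasDeriv (t : ℝ) : HasDerivAt gaussI (-t) (stdGaussCDF t) := by
  have houter : HasDerivAt gpdf (-t * gpdf t) (Function.invFun stdGaussCDF (stdGaussCDF t)) := by
    rw [stdG_invFun]; exact gpdf_hasDeriv t
  have h1 := houter.comp _ (invFun_hasDeriv t)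
  have h2 : -t * gpdf t * (gpdf t)⁻¹ = -t := by
    field_simp [(gpdf_pos t).ne']
  rw [h2] at h1
  apply h1.congr_of_eventuallyEq
  filter_upwards [isOpen_Ioo.mem_nhds (⟨stdG_pos t, stdG_lt_one t⟩ : stdGaussCDF t ∈ Set.Ioo (0:ℝ) 1)] with p hp
  exact gaussI_eqOn p hp

lemma deriv_gaussI_eqOn : ∀ p ∈ Set.Ioo (0:ℝ) 1,
    deriv gaussI p = -(Function.invFun stdGaussCDF p) := by
  intro p hp
  obtain ⟨s, rfl⟩ := stdG_surj hp
  rw [(gaussI_hasDeriv s).deriv, stdG_invFun]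

lemma deriv2_gaussI_at (t : ℝ) :
    deriv (deriv gaussI) (stdGaussCDF t) = -(gpdf t)⁻¹ := by
  have h1 : HasDerivAt (fun p => -(Function.invFun stdGaussCDF p)) (-(gpdf t)⁻¹) (stdGaussCDF t) :=
    (invFun_hasDeriv t).neg
  have h2 : HasDerivAt (deriv gaussI) (-(gpdf t)⁻¹) (stdGaussCDF t) := by
    apply h1.congr_of_eventuallyEq
    filter_upwards [isOpen_Ioo.mem_nhds (⟨stdG_pos t, stdG_lt_one t⟩ : stdGaussCDF t ∈ Set.Ioo (0:ℝ) 1)] with p hp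
    exact deriv_gaussI_eqOn p hp
  exact h2.deriv

/-- For every `c > 0` there exist `a, b ∈ (0,1)` with
`I(b) − I(a) − I′(b)(b − a) + (c/2) I″(b)(a − b)² < 0`: the two-point inequality
`I(b) − I(a) − I′(b)(b − a) ≥ (c/2)(−I″(b))(a − b)²` fails on `(0,1)` for every
`c > 0`. -/
theorem two_point_inequality_fails (c : ℝ) (hc : 0 < c) :
    ∃ a ∈ Set.Ioo (0 : ℝ) 1, ∃ b ∈ Set.Ioo (0 : ℝ) 1,
      gaussI b - gaussI a - deriv gaussI b * (b - a)
        + c / 2 * deriv (deriv gaussI) b * (a - b) ^ 2 < 0 := by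
  have hsqrt : 2 < Real.sqrt (2 * Real.pi) := by
    have h := Real.sq_sqrt (by positivity : (0:ℝ) ≤ 2 * Real.pi)
    nlinarith [Real.sqrt_nonneg (2 * Real.pi), Real.pi_gt_three]
  set D : ℝ := c / 32 * Real.sqrt (2 * Real.pi) with hD
  have hDpos : 0 < D := by positivity
  -- choose t
  have h1 : ∀ᶠ t : ℝ in atTop, 3/4 ≤ stdGaussCDF t :=
    stdG_tendsto_atTop.eventually (eventually_ge_nhds (by norm_num))
  obtain ⟨t, ht34, htbig⟩ := (h1.and (eventually_ge_atTop (max (2/D) 1))).exists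
  have ht1 : (1:ℝ) ≤ t := le_trans (le_max_right _ _) htbig
  have htD : 2/D ≤ t := le_trans (le_max_left _ _) htbig
  have ht0 : (0:ℝ) ≤ t := by linarith
  have hkey : 1 / Real.sqrt (2 * Real.pi) + t/2 < D * Real.exp (t^2/2) := by
    have hexp : 1 + t^2/2 ≤ Real.exp (t^2/2) := by
      have := Real.add_one_le_exp (t^2/2); linarith
    have hDt : 2 ≤ D * t := by
      rw [div_le_iff₀ hDpos] at htD; linarith
    have hinv : 1 / Real.sqrt (2 * Real.pi) < 1/2 := by
      rw [div_lt_div_iff₀ (by positivity) (by norm_num)]; linarith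
    nlinarith [mul_le_mul_of_nonneg_left hexp hDpos.le, mul_le_mul_of_nonneg_right hDt ht0]
  refine ⟨1/2, by norm_num, stdGaussCDF t, ⟨stdG_pos t, stdG_lt_one t⟩, ?_⟩
  rw [gaussI_at t, (gaussI_hasDeriv t).deriv, deriv2_gaussI_at t]
  have hIa : 0 < gaussI (1/2) := by
    rw [gaussI_eqOn (1/2) (by norm_num)]
    exact gpdf_pos _
  have hb1 : stdGaussCDF t < 1 := stdG_lt_one t
  have hb2 : 3/4 ≤ stdGaussCDF t := ht34
  have hgpdf_le : gpdf t ≤ 1 / Real.sqrt (2 * Real.pi) := by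
    unfold gpdf
    gcongr
    exact Real.exp_le_one_iff.2 (by nlinarith)
  have hgpdf_inv : (gpdf t)⁻¹ = Real.sqrt (2 * Real.pi) * Real.exp (t^2/2) := by
    unfold gpdf
    have hrw : Real.exp (-t^2/2) = (Real.exp (t^2/2))⁻¹ := by
      rw [← Real.exp_neg]; ring_nf
    rw [hrw, inv_div, div_inv_eq_mul]
  set b := stdGaussCDF t
  have hsq : (1/16 : ℝ) ≤ (1/2 - b)^2 := by nlinarith
  have ht2 : -(-t) * (b - 1/2) ≤ t/2 := by nlinarith
  rw [hgpdf_inv]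
  simp only [hD] at hkey
  nlinarith [mul_le_mul_of_nonneg_left hsq (by positivity : (0:ℝ) ≤ c/2 * (Real.sqrt (2 * Real.pi) * Real.exp (t^2/2)))]
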